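/- With notation as in the context, each of the three elements 2A − 3u, 2A − 3v, 2A − 3w is nonzero, and each of the three field elements c_u = −48A/(2A − 3u), c_v = −48A/(2A − 3v), c_w = −48A/(2A − 3w) satisfies c³ = j(E), where j(E) = 6912·A³/(4A³ + 27B²) is the j-invariant of E. That is, each of the three displayed values is a cube root of the j-invariant of E. -/
import Mathlib


open Polynomial

/-- With `ψ₃(X) = 3X⁴ + 6AX² + 12BX − A² = 3(X−x₁)(X−x₂)(X−x₃)(X−x₄)` over a field `K` of
characteristic different from `2` and `3`, with `4A³ + 27B² ≠ 0`, and
`u = x₁x₂ + x₃x₄`, `v = x₁x₃ + x₂x₄`, `w = x₁x₄ + x₂x₃`: the elements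
`2A − 3u`, `2A − 3v`, `2A − 3w` are nonzero, and each of
`−48A/(2A − 3u)`, `−48A/(2A − 3v)`, `−48A/(2A − 3w)` is a cube root of
`j(E) = 6912·A³/(4A³ + 27B²)`. -/
theorem stmt3 {K : Type*} [Field K] (h2 : (2 : K) ≠ 0) (h3 : (3 : K) ≠ 0)
    (A B : K) (hΔ : 4 * A ^ 3 + 27 * B ^ 2 ≠ 0) (x₁ x₂ x₃ x₄ : K)
    (hψ : C 3 * X ^ 4 + C (6 * A) * X ^ 2 + C (12 * B) * X - C (A ^ 2)
        = C 3 * (X - C x₁) * (X - C x₂) * (X - C x₃) * (X - C x₄))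
    (u v w : K) (hu : u = x₁ * x₂ + x₃ * x₄) (hv : v = x₁ * x₃ + x₂ * x₄)
    (hw : w = x₁ * x₄ + x₂ * x₃) :
    (2 * A - 3 * u ≠ 0 ∧ 2 * A - 3 * v ≠ 0 ∧ 2 * A - 3 * w ≠ 0) ∧
      (-48 * A / (2 * A - 3 * u)) ^ 3 = 6912 * A ^ 3 / (4 * A ^ 3 + 27 * B ^ 2) ∧
      (-48 * A / (2 * A - 3 * v)) ^ 3 = 6912 * A ^ 3 / (4 * A ^ 3 + 27 * B ^ 2) ∧
      (-48 * A / (2 * A - 3 * w)) ^ 3 = 6912 * A ^ 3 / (4 * A ^ 3 + 27 * B ^ 2) := by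
  -- extract the coefficient equations
  ring_nf at hψ
  have h3' := congrArg (fun p => coeff p 3) hψ
  have h2' := congrArg (fun p => coeff p 2) hψ
  have h1' := congrArg (fun p => coeff p 1) hψ
  have h0' := congrArg (fun p => coeff p 0) hψ
  simp only [X_mul_C, X_pow_mul_C, coeff_add, coeff_sub, coeff_neg,
    coeff_mul_X_pow', coeff_mul_C, coeff_C_mul, coeff_C, coeff_mul_X, coeff_X_pow,
    coeff_C_mul_X, coeff_C_mul_X_pow] at h3' h2' h1' h0'
  norm_num at h3' h2' h1' h0'
  -- each of 2A-3t is a cube root of -16(4A³+27B²)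
  have keyu : (2 * A - 3 * u) ^ 3 = -16 * (4 * A ^ 3 + 27 * B ^ 2) := by
    rw [hu]
    linear_combination
      (9 * (x₁ * x₂ * x₃ + x₁ * x₂ * x₄ + x₁ * x₃ * x₄ + x₂ * x₃ * x₄) * (x₁ * x₂ + x₃ * x₄)
        - 9 * (x₁ + x₂ + x₃ + x₄) * (x₁ * x₂ * x₃ * x₄)) * h3'
      + (9 * (x₁ * x₂ + x₃ * x₄) ^ 2 - 36 * (x₁ * x₂ * x₃ * x₄)) * h2'
      + (-9 * (x₁ * x₂ * x₃ + x₁ * x₂ * x₄ + x₁ * x₃ * x₄ + x₂ * x₃ * x₄) + 36 * B) * h1'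
      + (36 * (x₁ * x₂ + x₃ * x₄) - 72 * A) * h0'
  have keyv : (2 * A - 3 * v) ^ 3 = -16 * (4 * A ^ 3 + 27 * B ^ 2) := by
    rw [hv]
    linear_combination
      (9 * (x₁ * x₂ * x₃ + x₁ * x₂ * x₄ + x₁ * x₃ * x₄ + x₂ * x₃ * x₄) * (x₁ * x₃ + x₂ * x₄)
        - 9 * (x₁ + x₂ + x₃ + x₄) * (x₁ * x₂ * x₃ * x₄)) * h3'
      + (9 * (x₁ * x₃ + x₂ * x₄) ^ 2 - 36 * (x₁ * x₂ * x₃ * x₄)) * h2'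
      + (-9 * (x₁ * x₂ * x₃ + x₁ * x₂ * x₄ + x₁ * x₃ * x₄ + x₂ * x₃ * x₄) + 36 * B) * h1'
      + (36 * (x₁ * x₃ + x₂ * x₄) - 72 * A) * h0'
  have keyw : (2 * A - 3 * w) ^ 3 = -16 * (4 * A ^ 3 + 27 * B ^ 2) := by
    rw [hw]
    linear_combination
      (9 * (x₁ * x₂ * x₃ + x₁ * x₂ * x₄ + x₁ * x₃ * x₄ + x₂ * x₃ * x₄) * (x₁ * x₄ + x₂ * x₃)
        - 9 * (x₁ + x₂ + x₃ + x₄) * (x₁ * x₂ * x₃ * x₄)) * h3'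
      + (9 * (x₁ * x₄ + x₂ * x₃) ^ 2 - 36 * (x₁ * x₂ * x₃ * x₄)) * h2'
      + (-9 * (x₁ * x₂ * x₃ + x₁ * x₂ * x₄ + x₁ * x₃ * x₄ + x₂ * x₃ * x₄) + 36 * B) * h1'
      + (36 * (x₁ * x₄ + x₂ * x₃) - 72 * A) * h0'
  have h16 : (-16 : K) * (4 * A ^ 3 + 27 * B ^ 2) ≠ 0 := by
    refine mul_ne_zero (fun h => ?_) hΔ
    exact pow_ne_zero 4 h2 (by linear_combination -h)
  have hnu : 2 * A - 3 * u ≠ 0 := fun h => h16 (by rw [← keyu, h]; ring)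
  have hnv : 2 * A - 3 * v ≠ 0 := fun h => h16 (by rw [← keyv, h]; ring)
  have hnw : 2 * A - 3 * w ≠ 0 := fun h => h16 (by rw [← keyw, h]; ring)
  refine ⟨⟨hnu, hnv, hnw⟩, ?_, ?_, ?_⟩
  · rw [div_pow, keyu, div_eq_div_iff h16 hΔ]; ring
  · rw [div_pow, keyv, div_eq_div_iff h16 hΔ]; ring
  · rw [div_pow, keyw, div_eq_div_iff h16 hΔ]; ring
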